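/- Let X be a set, g : X × X → (-∞,∞] a symmetric kernel, ζ a point, and E ⊆ X. Suppose ν is a probability measure supported on a compact set disjoint from a neighborhood where g(·,ζ) is infinite, such that g(·,ζ) is bounded on supp(ν) and ∫∫ g dν dν < ∞. If E is a Borel set of 'capacity zero' (no probability measure supported on a compact subset of E has finite energy ∫∫ g dμ dμ after subtracting the bounded terms), then ν(E) = 0. -/
import Mathlib


open MeasureTheory Filter
open scoped ENNReal

/-- The positive part of an extended real number, valued in `ℝ≥0∞`. -/
noncomputable def EReal.posPartENN (x : EReal) : ℝ≥0∞ :=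
  if x = ⊤ then ⊤ else ENNReal.ofReal x.toReal

/-- The integral of an `EReal`-valued function `f` against a measure `μ`, defined as the
difference of the `lintegral`s of the positive and negative parts of `f`. -/
noncomputable def eint {α : Type*} [MeasurableSpace α] (μ : Measure α) (f : α → EReal) :
    EReal :=
  ((∫⁻ a, (f a).posPartENN ∂μ : ℝ≥0∞) : EReal) - ((∫⁻ a, (-(f a)).posPartENN ∂μ : ℝ≥0∞) : EReal)

/-- Finite-energy measures give no mass to capacity-zero sets: let `g` be a symmetric
kernel, `ζ` a point, and `ν` a probability measure carried by a compact set `S` on which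
`g(·,ζ)` is finite and bounded and on which the extended kernel
`g(x,y) - g(x,ζ) - g(y,ζ)` is bounded below by `C`. If `ν` has finite energy (the
positive part of the energy, after subtracting the bound `C`, is finite) and `E` is a
Borel set of capacity zero (every probability measure carried by a compact subset of `E`
has infinite energy after subtracting `C`), then `ν E = 0`. -/
theorem finite_energy_measure_null_on_capacity_zero
    {X : Type*} [TopologicalSpace X] [MeasurableSpace X] [BorelSpace X]
    (g : X → X → EReal) (hsym : ∀ x y, g x y = g y x) (ζ : X)
    (ν : Measure X) [IsProbabilityMeasure ν] [ν.InnerRegular]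
    (S : Set X) (hS : IsCompact S) (hSν : ν S = 1)
    (B : ℝ) (hB : ∀ x ∈ S, g x ζ ≠ ⊤ ∧ (-(B : EReal)) ≤ g x ζ ∧ g x ζ ≤ (B : EReal))
    (C : ℝ) (hC : ∀ x ∈ S, ∀ y ∈ S, (C : EReal) ≤ g x y - g x ζ - g y ζ)
    (hfin : (∫⁻ p : X × X,
        ((g p.1 p.2 - g p.1 ζ - g p.2 ζ) - (C : EReal)).posPartENN ∂(ν.prod ν)) ≠ ⊤)
    (E : Set X) (hE : MeasurableSet E)
    (hcap : ∀ μ : Measure X, IsProbabilityMeasure μ →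
      (∃ e, e ⊆ E ∧ IsCompact e ∧ μ e = 1) →
      (∫⁻ p : X × X,
        ((g p.1 p.2 - g p.1 ζ - g p.2 ζ) - (C : EReal)).posPartENN ∂(μ.prod μ)) = ⊤) :
    ν E = 0 := by
  by_contra hne
  have hEfin : ν E ≠ ⊤ := measure_ne_top ν E
  obtain ⟨e, heE, hec, hlt⟩ := hE.exists_isCompact_lt_add hEfin hne
  have hepos : ν e ≠ 0 := by
    intro h0
    rw [h0, zero_add] at hlt
    exact lt_irrefl _ hlt
  have hefin : ν e ≠ ⊤ := measure_ne_top ν e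
  set c : ℝ≥0∞ := (ν e)⁻¹ with hc
  have hcfin : c ≠ ⊤ := ENNReal.inv_ne_top.mpr hepos
  set μ : Measure X := c • ν.restrict e with hμ
  have hmue : μ e = 1 := by
    rw [hμ, Measure.smul_apply, smul_eq_mul, Measure.restrict_apply_self]
    exact ENNReal.inv_mul_cancel hepos hefin
  have hprob : IsProbabilityMeasure μ := by
    constructor
    rw [hμ, Measure.smul_apply, smul_eq_mul, Measure.restrict_apply MeasurableSet.univ,
      Set.univ_inter]
    exact ENNReal.inv_mul_cancel hepos hefin
  have hinf := hcap μ hprob ⟨e, heE, hec, hmue⟩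
  have hμle : ∀ t : Set X, μ t ≤ c * ν t := by
    intro t
    rw [hμ, Measure.smul_apply, smul_eq_mul]
    exact mul_le_mul_right (Measure.restrict_apply_le e t) c
  have hprodle : μ.prod μ ≤ (c * c) • (ν.prod ν) := by
    rw [Measure.le_iff]
    intro s hs
    rw [Measure.smul_apply, smul_eq_mul, Measure.prod_apply hs, Measure.prod_apply hs]
    calc (∫⁻ x, μ (Prod.mk x ⁻¹' s) ∂μ)
        = c * ∫⁻ x, μ (Prod.mk x ⁻¹' s) ∂(ν.restrict e) := by
          simp only [hμ, lintegral_smul_measure, smul_eq_mul]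
      _ ≤ c * ∫⁻ x, μ (Prod.mk x ⁻¹' s) ∂ν :=
          mul_le_mul_right (lintegral_mono' Measure.restrict_le_self le_rfl) c
      _ ≤ c * ∫⁻ x, c * ν (Prod.mk x ⁻¹' s) ∂ν :=
          mul_le_mul_right (lintegral_mono fun x => hμle _) c
      _ = c * (c * ∫⁻ x, ν (Prod.mk x ⁻¹' s) ∂ν) := by
          rw [lintegral_const_mul' _ _ hcfin]
      _ = c * c * ∫⁻ x, ν (Prod.mk x ⁻¹' s) ∂ν := by ring
  have hle : (∫⁻ p : X × X,
        ((g p.1 p.2 - g p.1 ζ - g p.2 ζ) - (C : EReal)).posPartENN ∂(μ.prod μ)) ≤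
      (c * c) * (∫⁻ p : X × X,
        ((g p.1 p.2 - g p.1 ζ - g p.2 ζ) - (C : EReal)).posPartENN ∂(ν.prod ν)) := by
    calc _ ≤ (∫⁻ p : X × X,
        ((g p.1 p.2 - g p.1 ζ - g p.2 ζ) - (C : EReal)).posPartENN ∂((c * c) • ν.prod ν)) :=
          lintegral_mono' hprodle le_rfl
      _ = _ := lintegral_smul_measure _ _
  rw [hinf] at hle
  exact (lt_irrefl ⊤ (lt_of_le_of_lt hle
    (ENNReal.mul_lt_top (ENNReal.mul_ne_top hcfin hcfin).lt_top hfin.lt_top))).elim
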